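/- The complex Hermite polynomials are orthogonal with respect to the Gaussian measure: ∫_ℂ H_{m,n}(z, z̄) · conj(H_{m',n'}(z, z̄)) · e^{-|z|²} dA(z) = π · m! · n! · δ_{m,m'} · δ_{n,n'}, where dA is Lebesgue measure on ℂ ≅ ℝ². -/

import Mathlib

open MeasureTheory Complex Real

noncomputable def Hphys (n : ℕ) (x : ℝ) : ℝ :=
  (-1 : ℝ)^n * Real.exp (x^2) * iteratedDeriv n (fun t : ℝ => Real.exp (-t^2)) x

noncomputable def hFun (n : ℕ) (x : ℝ) : ℝ := Real.exp (-x^2/2) * Hphys n x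

noncomputable def Hc (m n : ℕ) (z : ℂ) : ℂ :=
  ∑ k ∈ Finset.range (min m n + 1),
    (-1 : ℂ)^k * (Nat.factorial k : ℂ) * (Nat.choose m k : ℂ) * (Nat.choose n k : ℂ)
      * z^(m-k) * (starRingEnd ℂ z)^(n-k)

noncomputable def Lag (n α : ℕ) (x : ℂ) : ℂ :=
  ∑ k ∈ Finset.range (n + 1),
    (-1 : ℂ)^k * (Nat.choose (n + α) (n - k) : ℂ) * x^k / (Nat.factorial k : ℂ)



lemma pow_le_factorial_mul_exp (n : ℕ) {x : ℝ} (hx : 0 ≤ x) : x ^ n ≤ n.factorial * Real.exp x := by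
  have h := Real.sum_le_exp_of_nonneg hx (n+1)
  have h2 : x ^ n / n.factorial ≤ ∑ i ∈ Finset.range (n+1), x ^ i / i.factorial :=
    Finset.single_le_sum (f := fun i => x ^ i / (i.factorial : ℝ)) (fun i _ => by positivity)
      (Finset.self_mem_range_succ n)
  have hf : (0:ℝ) < n.factorial := by positivity
  calc x ^ n = (x ^ n / n.factorial) * n.factorial := by field_simp
    _ ≤ Real.exp x * n.factorial := mul_le_mul_of_nonneg_right (h2.trans h) hf.le
    _ = n.factorial * Real.exp x := by ring

lemma gauss_pow_bound (n : ℕ) (t : ℝ) (ht : 0 ≤ t) :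
    t ^ n * Real.exp (-t^2) ≤ (n.factorial * Real.exp (1/2)) * Real.exp (-(1/2) * t^2) := by
  have h1 : t ^ n ≤ n.factorial * Real.exp t := pow_le_factorial_mul_exp n ht
  have h2 : Real.exp t ≤ Real.exp (t^2/2 + 1/2) := by
    apply Real.exp_le_exp.2; nlinarith [sq_nonneg (t-1)]
  calc t ^ n * Real.exp (-t^2) ≤ (n.factorial * Real.exp (t^2/2 + 1/2)) * Real.exp (-t^2) := by
        apply mul_le_mul_of_nonneg_right _ (Real.exp_pos _).le
        exact h1.trans (mul_le_mul_of_nonneg_left h2 (by positivity))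
    _ = (n.factorial * Real.exp (1/2)) * Real.exp (-(1/2) * t^2) := by
        rw [mul_assoc, mul_assoc, ← Real.exp_add, ← Real.exp_add]; ring_nf

lemma integrable_monomial (a b : ℕ) :
    Integrable (fun z : ℂ => z ^ a * (starRingEnd ℂ z) ^ b * ((Real.exp (-(‖z‖)^2) : ℝ) : ℂ)) := by
  have hint : Integrable (fun z : ℂ => Complex.exp (-(1/2:ℂ) * ‖z‖^2 + 0 * (inner ℝ (0:ℂ) z : ℝ))) :=
    GaussianFourier.integrable_cexp_neg_mul_sq_norm_add (by norm_num) 0 0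
  have hint2 := hint.norm
  refine ((hint2.const_mul ((a+b).factorial * Real.exp (1/2))).mono' ?_ ?_)
  · apply Continuous.aestronglyMeasurable
    have h1 : Continuous fun z : ℂ => ((Real.exp (-(‖z‖)^2) : ℝ) : ℂ) := by
      exact Complex.continuous_ofReal.comp (Real.continuous_exp.comp (by continuity))
    exact ((continuous_pow a).mul ((Complex.continuous_conj.pow b))).mul h1
  · filter_upwards with z
    have habs : ‖z‖ = ‖z‖ := rfl
    have h3 : ‖z ^ a * (starRingEnd ℂ z) ^ b * ((Real.exp (-(‖z‖)^2) : ℝ) : ℂ)‖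
        = ‖z‖ ^ (a+b) * Real.exp (-‖z‖^2) := by
      rw [norm_mul, norm_mul, norm_pow, norm_pow, Complex.norm_conj, Complex.norm_real,
        Real.norm_of_nonneg (Real.exp_pos _).le, pow_add]
    rw [h3]
    refine (gauss_pow_bound (a+b) ‖z‖ (norm_nonneg z)).trans (le_of_eq ?_)
    have h4 : ‖Complex.exp (-(1/2:ℂ) * ‖z‖^2 + 0 * (inner ℝ (0:ℂ) z : ℝ))‖ = Real.exp (-(1/2) * ‖z‖^2) := by
      rw [Complex.norm_exp]
      norm_num [← Complex.ofReal_pow]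
    rw [h4]

lemma integral_monomial_eq (a : ℕ) :
    ∫ z : ℂ, z ^ a * (starRingEnd ℂ z) ^ a * ((Real.exp (-(‖z‖)^2) : ℝ) : ℂ)
      = (Real.pi : ℂ) * (Nat.factorial a : ℂ) := by
  have h1 : ∀ z : ℂ, z ^ a * (starRingEnd ℂ z) ^ a * ((Real.exp (-(‖z‖)^2) : ℝ) : ℂ)
      = (((‖z‖^2) ^ a * Real.exp (-(‖z‖)^2) : ℝ) : ℂ) := by
    intro z
    rw [← mul_pow, Complex.mul_conj, Complex.normSq_eq_norm_sq]
    rw [show ‖z‖ = ‖z‖ from rfl]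
    push_cast
    ring
  simp_rw [h1]
  rw [show (∫ z : ℂ, (((‖z‖^2) ^ a * Real.exp (-(‖z‖)^2) : ℝ) : ℂ)) = (((∫ z : ℂ, (‖z‖^2) ^ a * Real.exp (-(‖z‖)^2)) : ℝ) : ℂ) from integral_ofReal]
  have h2 : ∀ z : ℂ, (‖z‖^2) ^ a * Real.exp (-(‖z‖)^2)
      = ‖z‖ ^ ((2*a : ℕ) : ℝ) * Real.exp (-‖z‖ ^ (2:ℝ)) := by
    intro z
    rw [Real.rpow_natCast, Real.rpow_two, ← pow_mul]
  simp_rw [h2]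
  rw [Complex.integral_rpow_mul_exp_neg_rpow (by norm_num) (by exact lt_of_lt_of_le (by norm_num) (Nat.cast_nonneg _))]
  rw [show (((2*a : ℕ):ℝ) + 2)/2 = (a:ℝ) + 1 by push_cast; ring]
  rw [Real.Gamma_nat_eq_factorial]
  push_cast
  ring

lemma integral_monomial_ne (a b : ℕ) (hab : a ≠ b) :
    ∫ z : ℂ, z ^ a * (starRingEnd ℂ z) ^ b * ((Real.exp (-(‖z‖)^2) : ℝ) : ℂ) = 0 := by
  set f : ℂ → ℂ := fun z => z ^ a * (starRingEnd ℂ z) ^ b * ((Real.exp (-(‖z‖)^2) : ℝ) : ℂ) with hf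
  set I := ∫ z : ℂ, f z with hI
  have hd : (a:ℝ) - b ≠ 0 := sub_ne_zero.2 (by exact_mod_cast hab)
  set θ : ℝ := Real.pi / ((a:ℝ) - b) with hθ
  set c : Circle := Circle.exp θ with hc
  have hrot : MeasurePreserving (rotation c) volume volume :=
    (rotation c).measurePreserving
  have hcomp : ∫ z : ℂ, f (rotation c z) = I :=
    hrot.integral_comp (rotation c).toHomeomorph.measurableEmbedding f
  have hpoint : ∀ z : ℂ, f (rotation c z)
      = ((c:ℂ)^a * (starRingEnd ℂ (c:ℂ))^b) * f z := by
    intro z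
    rw [hf]
    simp only [rotation_apply, map_mul, norm_mul, mul_pow, Circle.norm_coe, one_pow, one_mul]
    ring
  have hval : (c:ℂ)^a * (starRingEnd ℂ (c:ℂ))^b = -1 := by
    rw [hc, Circle.coe_exp, ← Complex.exp_conj]
    rw [show (starRingEnd ℂ) ((θ:ℂ) * Complex.I) = -(θ:ℂ) * Complex.I by
      simp [Complex.conj_I, Complex.conj_ofReal]]
    rw [← Complex.exp_nat_mul, ← Complex.exp_nat_mul, ← Complex.exp_add]
    rw [show (a:ℂ) * ((θ:ℂ) * Complex.I) + (b:ℂ) * (-(θ:ℂ) * Complex.I)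
        = ((((a:ℝ) - b) * θ : ℝ) : ℂ) * Complex.I by push_cast; ring]
    rw [show ((a:ℝ) - b) * θ = Real.pi by rw [hθ]; field_simp]
    exact Complex.exp_pi_mul_I
  simp_rw [hpoint, hval] at hcomp
  rw [show (fun z => (-1:ℂ) * f z) = fun z => (-1:ℂ) • f z from rfl, integral_smul,
    smul_eq_mul] at hcomp
  have h2 : (2:ℂ) * I = 0 := by linear_combination -hcomp
  have := mul_eq_zero.1 h2
  simpa using this

-- alternating Vandermonde: ∑_k (-1)^k C(m',k) C(M-k, n'-k) = C(M-m', n')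
lemma altVandermonde (m' : ℕ) : ∀ M n' : ℕ, m' ≤ M → n' ≤ M →
    ∑ k ∈ Finset.range (n'+1), (-1:ℂ)^k * (m'.choose k : ℂ) * ((M-k).choose (n'-k) : ℂ)
      = ((M-m').choose n' : ℂ) := by
  induction m' with
  | zero =>
    intro M n' _ _
    rw [Finset.sum_eq_single 0]
    · simp
    · intro k _ hk
      obtain ⟨j, rfl⟩ := Nat.exists_eq_succ_of_ne_zero hk
      simp [Nat.choose_zero_succ]
    · intro h; simp at h
  | succ m' ih =>
    intro M n' hm hn
    match n' with
    | 0 => simp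
    | (n''+1) =>
      have IH1 := ih M (n''+1) (by omega) (by omega)
      have IH2 := ih (M-1) n'' (by omega) (by omega)
      calc ∑ k ∈ Finset.range (n''+2), (-1:ℂ)^k * ((m'+1).choose k : ℂ) * ((M-k).choose (n''+1-k) : ℂ)
          = ∑ i ∈ Finset.range (n''+1),
              ((-1:ℂ)^(i+1) * (m'.choose i : ℂ) * (((M-1)-i).choose (n''-i) : ℂ)
               + (-1:ℂ)^(i+1) * (m'.choose (i+1) : ℂ) * ((M-(i+1)).choose (n''+1-(i+1)) : ℂ))
            + (-1:ℂ)^0 * (m'.choose 0 : ℂ) * ((M-0).choose (n''+1-0) : ℂ) := by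
            rw [Finset.sum_range_succ']
            congr 1
            · apply Finset.sum_congr rfl
              intro i _
              have h2 : M - (i+1) = M-1-i := by omega
              have h3 : n''+1-(i+1) = n''-i := by omega
              have h4 : ((m'+1).choose (i+1) : ℂ) = (m'.choose i : ℂ) + (m'.choose (i+1) : ℂ) := by
                exact_mod_cast congrArg (Nat.cast : ℕ → ℂ) (Nat.choose_succ_succ m' i)
              calc (-1:ℂ)^(i+1) * ((m'+1).choose (i+1) : ℂ) * ((M-(i+1)).choose (n''+1-(i+1)) : ℂ)
                  = (-1:ℂ)^(i+1) * ((m'.choose i : ℂ) + (m'.choose (i+1) : ℂ))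
                      * ((M-(i+1)).choose (n''+1-(i+1)) : ℂ) := by rw [h4]
                _ = (-1:ℂ)^(i+1) * (m'.choose i : ℂ) * (((M-1)-i).choose (n''-i) : ℂ)
                      + (-1:ℂ)^(i+1) * (m'.choose (i+1) : ℂ) * ((M-(i+1)).choose (n''+1-(i+1)) : ℂ) := by
                    rw [h2, h3]; ring
            · simp
        _ = -(∑ i ∈ Finset.range (n''+1), (-1:ℂ)^i * (m'.choose i : ℂ) * (((M-1)-i).choose (n''-i) : ℂ))
            + ∑ k ∈ Finset.range (n''+2), (-1:ℂ)^k * (m'.choose k : ℂ) * ((M-k).choose (n''+1-k) : ℂ) := by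
            rw [Finset.sum_add_distrib]
            have hA : ∑ i ∈ Finset.range (n''+1), (-1:ℂ)^(i+1) * (m'.choose i : ℂ) * (((M-1)-i).choose (n''-i) : ℂ)
                = -(∑ i ∈ Finset.range (n''+1), (-1:ℂ)^i * (m'.choose i : ℂ) * (((M-1)-i).choose (n''-i) : ℂ)) := by
              rw [← Finset.sum_neg_distrib]
              apply Finset.sum_congr rfl
              intro i _
              ring
            rw [hA, Finset.sum_range_succ' (fun k => (-1:ℂ)^k * (m'.choose k : ℂ) * ((M-k).choose (n''+1-k) : ℂ)) (n''+1)]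
            ring
        _ = -(((M-1)-m').choose n'' : ℂ) + ((M-m').choose (n''+1) : ℂ) := by rw [IH2, IH1]
        _ = ((M-(m'+1)).choose (n''+1) : ℂ) := by
            have h5 : M - m' = (M - (m'+1)) + 1 := by omega
            have h6 : (M-1) - m' = M - (m'+1) := by omega
            have h7 : ((M-m').choose (n''+1) : ℂ)
                = ((M-(m'+1)).choose n'' : ℂ) + ((M-(m'+1)).choose (n''+1) : ℂ) := by
              rw [h5]
              exact_mod_cast congrArg (Nat.cast : ℕ → ℂ) (Nat.choose_succ_succ (M-(m'+1)) n'')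
            rw [h6, h7]; ring

lemma choose_mul_choose_sub (n k s : ℕ) :
    n.choose k * (n-k).choose s = n.choose s * (n-s).choose k := by
  by_cases hk : k ≤ n
  · by_cases hs : s ≤ n
    · by_cases hks : k + s ≤ n
      · have h1 : (n.choose k * (n-k).choose s) * (k.factorial * s.factorial * (n-k-s).factorial)
            = n.factorial := by
          have e1 : (n-k).choose s * s.factorial * (n-k-s).factorial = (n-k).factorial :=
            Nat.choose_mul_factorial_mul_factorial (by omega)
          have e2 : n.choose k * k.factorial * (n-k).factorial = n.factorial :=
            Nat.choose_mul_factorial_mul_factorial hk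
          calc (n.choose k * (n-k).choose s) * (k.factorial * s.factorial * (n-k-s).factorial)
              = n.choose k * k.factorial * ((n-k).choose s * s.factorial * (n-k-s).factorial) := by ring
            _ = n.choose k * k.factorial * (n-k).factorial := by rw [e1]
            _ = n.factorial := e2
        have h2 : (n.choose s * (n-s).choose k) * (k.factorial * s.factorial * (n-k-s).factorial)
            = n.factorial := by
          have e1 : (n-s).choose k * k.factorial * (n-s-k).factorial = (n-s).factorial :=
            Nat.choose_mul_factorial_mul_factorial (by omega)
          have e2 : n.choose s * s.factorial * (n-s).factorial = n.factorial :=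
            Nat.choose_mul_factorial_mul_factorial hs
          have e3 : n-s-k = n-k-s := by omega
          calc (n.choose s * (n-s).choose k) * (k.factorial * s.factorial * (n-k-s).factorial)
              = n.choose s * s.factorial * ((n-s).choose k * k.factorial * (n-k-s).factorial) := by ring
            _ = n.choose s * s.factorial * ((n-s).choose k * k.factorial * (n-s-k).factorial) := by rw [e3]
            _ = n.choose s * s.factorial * (n-s).factorial := by rw [e1]
            _ = n.factorial := e2
        have hpos : 0 < k.factorial * s.factorial * (n-k-s).factorial := by positivity
        exact Nat.eq_of_mul_eq_mul_right hpos (h1.trans h2.symm)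
      · rw [Nat.choose_eq_zero_of_lt (show n-k < s by omega),
          Nat.choose_eq_zero_of_lt (show n-s < k by omega)]
        ring
    · rw [Nat.choose_eq_zero_of_lt (show n < s by omega),
        Nat.choose_eq_zero_of_lt (show n-k < s by omega)]
      ring
  · rw [Nat.choose_eq_zero_of_lt (show n < k by omega),
      Nat.choose_eq_zero_of_lt (show n-s < k by omega)]
    ring

lemma innerSum (m' n' M : ℕ) (hm : m' ≤ M) (hn : n' ≤ M) :
    ∑ k' ∈ Finset.range (min m' n' + 1), (-1:ℂ)^k' * (k'.factorial : ℂ) * (m'.choose k' : ℂ)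
        * (n'.choose k' : ℂ) * ((M-k').factorial : ℂ)
      = (n'.factorial : ℂ) * ((M-n').factorial : ℂ) * ((M-m').choose n' : ℂ) := by
  have hext : ∑ k' ∈ Finset.range (min m' n' + 1), (-1:ℂ)^k' * (k'.factorial : ℂ) * (m'.choose k' : ℂ)
        * (n'.choose k' : ℂ) * ((M-k').factorial : ℂ)
      = ∑ k' ∈ Finset.range (n' + 1), (-1:ℂ)^k' * (k'.factorial : ℂ) * (m'.choose k' : ℂ)
        * (n'.choose k' : ℂ) * ((M-k').factorial : ℂ) := by
    apply Finset.sum_subset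
    · intro x hx
      simp only [Finset.mem_range] at *
      omega
    · intro x _ hx
      simp only [Finset.mem_range, not_lt] at hx
      rcases Nat.lt_or_ge m' x with h | h
      · rw [Nat.choose_eq_zero_of_lt h]; push_cast; ring
      · rw [Nat.choose_eq_zero_of_lt (show n' < x by omega)]; push_cast; ring
  rw [hext]
  have hterm : ∀ k' ∈ Finset.range (n'+1), (-1:ℂ)^k' * (k'.factorial : ℂ) * (m'.choose k' : ℂ)
        * (n'.choose k' : ℂ) * ((M-k').factorial : ℂ)
      = ((n'.factorial : ℂ) * ((M-n').factorial : ℂ))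
        * ((-1:ℂ)^k' * (m'.choose k' : ℂ) * (((M-k').choose (n'-k') : ℕ) : ℂ)) := by
    intro k' hk'
    simp only [Finset.mem_range] at hk'
    have hk'n : k' ≤ n' := by omega
    have hnat : k'.factorial * (n'.choose k') * (M-k').factorial
        = n'.factorial * (M-n').factorial * ((M-k').choose (n'-k')) := by
      have e1 : n'.choose k' * k'.factorial * (n'-k').factorial = n'.factorial :=
        Nat.choose_mul_factorial_mul_factorial hk'n
      have e2 : (M-k').choose (n'-k') * (n'-k').factorial * (M-n').factorial = (M-k').factorial := by
        have := Nat.choose_mul_factorial_mul_factorial (show n'-k' ≤ M-k' by omega)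
        rw [show (M-k') - (n'-k') = M-n' by omega] at this
        exact this
      calc k'.factorial * (n'.choose k') * (M-k').factorial
          = k'.factorial * (n'.choose k') * ((M-k').choose (n'-k') * (n'-k').factorial * (M-n').factorial) := by rw [e2]
        _ = (n'.choose k' * k'.factorial * (n'-k').factorial) * (M-n').factorial * ((M-k').choose (n'-k')) := by ring
        _ = n'.factorial * (M-n').factorial * ((M-k').choose (n'-k')) := by rw [e1]
    have hc : (k'.factorial : ℂ) * (n'.choose k' : ℂ) * ((M-k').factorial : ℂ)
        = (n'.factorial : ℂ) * ((M-n').factorial : ℂ) * (((M-k').choose (n'-k') : ℕ) : ℂ) := by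
      exact_mod_cast congrArg (Nat.cast : ℕ → ℂ) hnat
    calc (-1:ℂ)^k' * (k'.factorial : ℂ) * (m'.choose k' : ℂ) * (n'.choose k' : ℂ) * ((M-k').factorial : ℂ)
        = ((k'.factorial : ℂ) * (n'.choose k' : ℂ) * ((M-k').factorial : ℂ)) * ((-1:ℂ)^k' * (m'.choose k' : ℂ)) := by ring
      _ = ((n'.factorial : ℂ) * ((M-n').factorial : ℂ) * (((M-k').choose (n'-k') : ℕ) : ℂ)) * ((-1:ℂ)^k' * (m'.choose k' : ℂ)) := by rw [hc]
      _ = ((n'.factorial : ℂ) * ((M-n').factorial : ℂ)) * ((-1:ℂ)^k' * (m'.choose k' : ℂ) * (((M-k').choose (n'-k') : ℕ) : ℂ)) := by ring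
  rw [Finset.sum_congr rfl hterm, ← Finset.mul_sum, altVandermonde m' M n' hm hn]

lemma alt_sum_cut (d N : ℕ) (hd : d ≤ N) :
    ∑ k ∈ Finset.range (N+1), (-1:ℂ)^k * (d.choose k : ℂ) = if d = 0 then 1 else 0 := by
  have hext : ∑ k ∈ Finset.range (N+1), (-1:ℂ)^k * (d.choose k : ℂ)
      = ∑ k ∈ Finset.range (d+1), (-1:ℂ)^k * (d.choose k : ℂ) := by
    symm
    apply Finset.sum_subset
    · intro x hx; simp only [Finset.mem_range] at *; omega
    · intro x _ hx
      simp only [Finset.mem_range] at hx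
      rw [Nat.choose_eq_zero_of_lt (by omega)]
      ring
  rw [hext]
  have := Int.alternating_sum_range_choose (n := d)
  have hc := congrArg (Int.cast : ℤ → ℂ) this
  push_cast at hc
  rw [hc]

lemma comb_main (m n m' n' : ℕ) (hbal : m + n' = n + m') :
    ∑ k ∈ Finset.range (min m n + 1), ∑ k' ∈ Finset.range (min m' n' + 1),
      (-1:ℂ)^(k+k') * (k.factorial : ℂ) * (k'.factorial : ℂ) * (m.choose k : ℂ) * (n.choose k : ℂ)
        * (m'.choose k' : ℂ) * (n'.choose k' : ℂ) * ((((m-k)+(n'-k')).factorial : ℕ) : ℂ)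
      = (m.factorial : ℂ) * (n.factorial : ℂ) * (if n = n' then 1 else 0) := by
  have houter : ∀ k ∈ Finset.range (min m n + 1),
      ∑ k' ∈ Finset.range (min m' n' + 1),
        (-1:ℂ)^(k+k') * (k.factorial : ℂ) * (k'.factorial : ℂ) * (m.choose k : ℂ) * (n.choose k : ℂ)
          * (m'.choose k' : ℂ) * (n'.choose k' : ℂ) * ((((m-k)+(n'-k')).factorial : ℕ) : ℂ)
      = (m.factorial : ℂ) * (n'.factorial : ℂ) * ((-1:ℂ)^k * (n.choose k : ℂ) * ((n-k).choose n' : ℂ)) := by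
    intro k hk
    simp only [Finset.mem_range] at hk
    have hkm : k ≤ m := by omega
    have hkn : k ≤ n := by omega
    set M : ℕ := m + n' - k with hM
    have hm'M : m' ≤ M := by omega
    have hn'M : n' ≤ M := by omega
    have hstep : ∀ k' ∈ Finset.range (min m' n' + 1),
        (-1:ℂ)^(k+k') * (k.factorial : ℂ) * (k'.factorial : ℂ) * (m.choose k : ℂ) * (n.choose k : ℂ)
          * (m'.choose k' : ℂ) * (n'.choose k' : ℂ) * ((((m-k)+(n'-k')).factorial : ℕ) : ℂ)
        = ((-1:ℂ)^k * (k.factorial : ℂ) * (m.choose k : ℂ) * (n.choose k : ℂ))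
          * ((-1:ℂ)^k' * (k'.factorial : ℂ) * (m'.choose k' : ℂ) * (n'.choose k' : ℂ) * ((M-k').factorial : ℂ)) := by
      intro k' hk'
      simp only [Finset.mem_range] at hk'
      have : (m-k)+(n'-k') = M - k' := by omega
      rw [this, pow_add]
      ring
    rw [Finset.sum_congr rfl hstep, ← Finset.mul_sum, innerSum m' n' M hm'M hn'M]
    rw [show M - n' = m - k by omega, show M - m' = n - k by omega]
    have hfac : (k.factorial : ℂ) * (m.choose k : ℂ) * ((m-k).factorial : ℂ) = (m.factorial : ℂ) := by
      have h0 := Nat.choose_mul_factorial_mul_factorial hkm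
      exact_mod_cast congrArg (Nat.cast : ℕ → ℂ)
        (show k.factorial * (m.choose k) * ((m-k).factorial) = m.factorial by
          rw [mul_comm (k.factorial) (m.choose k)]; exact h0)
    calc ((-1:ℂ)^k * (k.factorial : ℂ) * (m.choose k : ℂ) * (n.choose k : ℂ))
          * ((n'.factorial : ℂ) * ((m-k).factorial : ℂ) * ((n-k).choose n' : ℂ))
        = ((k.factorial : ℂ) * (m.choose k : ℂ) * ((m-k).factorial : ℂ)) * (n'.factorial : ℂ)
          * ((-1:ℂ)^k * (n.choose k : ℂ) * ((n-k).choose n' : ℂ)) := by ring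
      _ = (m.factorial : ℂ) * (n'.factorial : ℂ) * ((-1:ℂ)^k * (n.choose k : ℂ) * ((n-k).choose n' : ℂ)) := by rw [hfac]
  rw [Finset.sum_congr rfl houter, ← Finset.mul_sum]
  have hcc : ∀ k ∈ Finset.range (min m n + 1),
      (-1:ℂ)^k * (n.choose k : ℂ) * ((n-k).choose n' : ℂ)
      = (n.choose n' : ℂ) * ((-1:ℂ)^k * ((n-n').choose k : ℂ)) := by
    intro k _
    have := choose_mul_choose_sub n k n'
    have hc : (n.choose k : ℂ) * ((n-k).choose n' : ℂ) = (n.choose n' : ℂ) * ((n-n').choose k : ℂ) := by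
      exact_mod_cast congrArg (Nat.cast : ℕ → ℂ) this
    calc (-1:ℂ)^k * (n.choose k : ℂ) * ((n-k).choose n' : ℂ)
        = ((n.choose k : ℂ) * ((n-k).choose n' : ℂ)) * (-1:ℂ)^k := by ring
      _ = ((n.choose n' : ℂ) * ((n-n').choose k : ℂ)) * (-1:ℂ)^k := by rw [hc]
      _ = (n.choose n' : ℂ) * ((-1:ℂ)^k * ((n-n').choose k : ℂ)) := by ring
  rw [Finset.sum_congr rfl hcc, ← Finset.mul_sum]
  rw [alt_sum_cut (n-n') (min m n) (by omega)]
  by_cases hnn : n = n'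
  · subst hnn
    simp [Nat.choose_self]
  · rw [if_neg hnn]
    by_cases hlt : n < n'
    · rw [if_pos (by omega), Nat.choose_eq_zero_of_lt hlt]
      ring
    · rw [if_neg (by omega)]
      ring

lemma integral_monomial (a b : ℕ) :
    ∫ z : ℂ, z ^ a * (starRingEnd ℂ z) ^ b * ((Real.exp (-(‖z‖)^2) : ℝ) : ℂ)
      = if a = b then (Real.pi : ℂ) * (Nat.factorial a : ℂ) else 0 := by
  by_cases h : a = b
  · subst h; rw [if_pos rfl]; exact integral_monomial_eq a
  · rw [if_neg h]; exact integral_monomial_ne a b h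

theorem complexHermite_orthogonality (m n m' n' : ℕ) :
    ∫ z : ℂ, Hc m n z * (starRingEnd ℂ) (Hc m' n' z) * ((Real.exp (-(‖z‖)^2) : ℝ) : ℂ)
      = (Real.pi : ℂ) * (Nat.factorial m : ℂ) * (Nat.factorial n : ℂ)
          * (if m = m' then 1 else 0) * (if n = n' then 1 else 0) := by
  have hpt : ∀ z : ℂ, Hc m n z * (starRingEnd ℂ) (Hc m' n' z) * ((Real.exp (-(‖z‖)^2) : ℝ) : ℂ)
      = ∑ k ∈ Finset.range (min m n + 1), ∑ k' ∈ Finset.range (min m' n' + 1),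
          ((-1:ℂ)^(k+k') * (k.factorial : ℂ) * (k'.factorial : ℂ) * (m.choose k : ℂ) * (n.choose k : ℂ)
            * (m'.choose k' : ℂ) * (n'.choose k' : ℂ))
          * (z^((m-k)+(n'-k')) * (starRingEnd ℂ z)^((n-k)+(m'-k')) * ((Real.exp (-(‖z‖)^2) : ℝ) : ℂ)) := by
    intro z
    rw [Hc, Hc, map_sum, Finset.sum_mul_sum, Finset.sum_mul]
    refine Finset.sum_congr rfl fun k hk => ?_
    rw [Finset.sum_mul]
    refine Finset.sum_congr rfl fun k' hk' => ?_
    simp only [map_mul, map_pow, map_neg, map_one, Complex.conj_conj, map_natCast]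
    rw [pow_add z, pow_add ((starRingEnd ℂ) z), pow_add (-1:ℂ)]
    ring
  have hint : (∫ z : ℂ, Hc m n z * (starRingEnd ℂ) (Hc m' n' z) * ((Real.exp (-(‖z‖)^2) : ℝ) : ℂ))
      = ∑ k ∈ Finset.range (min m n + 1), ∑ k' ∈ Finset.range (min m' n' + 1),
          ((-1:ℂ)^(k+k') * (k.factorial : ℂ) * (k'.factorial : ℂ) * (m.choose k : ℂ) * (n.choose k : ℂ)
            * (m'.choose k' : ℂ) * (n'.choose k' : ℂ))
          * (∫ z : ℂ, z^((m-k)+(n'-k')) * (starRingEnd ℂ z)^((n-k)+(m'-k')) * ((Real.exp (-(‖z‖)^2) : ℝ) : ℂ)) := by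
    calc (∫ z : ℂ, Hc m n z * (starRingEnd ℂ) (Hc m' n' z) * ((Real.exp (-(‖z‖)^2) : ℝ) : ℂ))
        = ∫ z : ℂ, ∑ k ∈ Finset.range (min m n + 1), ∑ k' ∈ Finset.range (min m' n' + 1),
            ((-1:ℂ)^(k+k') * (k.factorial : ℂ) * (k'.factorial : ℂ) * (m.choose k : ℂ) * (n.choose k : ℂ)
              * (m'.choose k' : ℂ) * (n'.choose k' : ℂ))
            * (z^((m-k)+(n'-k')) * (starRingEnd ℂ z)^((n-k)+(m'-k')) * ((Real.exp (-(‖z‖)^2) : ℝ) : ℂ)) := by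
          congr 1; funext z; exact hpt z
      _ = ∑ k ∈ Finset.range (min m n + 1), ∫ z : ℂ, ∑ k' ∈ Finset.range (min m' n' + 1),
            ((-1:ℂ)^(k+k') * (k.factorial : ℂ) * (k'.factorial : ℂ) * (m.choose k : ℂ) * (n.choose k : ℂ)
              * (m'.choose k' : ℂ) * (n'.choose k' : ℂ))
            * (z^((m-k)+(n'-k')) * (starRingEnd ℂ z)^((n-k)+(m'-k')) * ((Real.exp (-(‖z‖)^2) : ℝ) : ℂ)) := by
          apply integral_finset_sum
          intro k _
          apply integrable_finset_sum
          intro k' _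
          exact (integrable_monomial ((m-k)+(n'-k')) ((n-k)+(m'-k'))).const_mul _
      _ = ∑ k ∈ Finset.range (min m n + 1), ∑ k' ∈ Finset.range (min m' n' + 1),
            ((-1:ℂ)^(k+k') * (k.factorial : ℂ) * (k'.factorial : ℂ) * (m.choose k : ℂ) * (n.choose k : ℂ)
              * (m'.choose k' : ℂ) * (n'.choose k' : ℂ))
            * (∫ z : ℂ, z^((m-k)+(n'-k')) * (starRingEnd ℂ z)^((n-k)+(m'-k')) * ((Real.exp (-(‖z‖)^2) : ℝ) : ℂ)) := by
          refine Finset.sum_congr rfl fun k _ => ?_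
          rw [integral_finset_sum _ (fun k' _ =>
            (integrable_monomial ((m-k)+(n'-k')) ((n-k)+(m'-k'))).const_mul _)]
          refine Finset.sum_congr rfl fun k' _ => ?_
          exact integral_const_mul _ _
  rw [hint]
  by_cases hbal : m + n' = n + m'
  · have hterm : ∀ k ∈ Finset.range (min m n + 1), ∀ k' ∈ Finset.range (min m' n' + 1),
        ((-1:ℂ)^(k+k') * (k.factorial : ℂ) * (k'.factorial : ℂ) * (m.choose k : ℂ) * (n.choose k : ℂ)
            * (m'.choose k' : ℂ) * (n'.choose k' : ℂ))
          * (∫ z : ℂ, z^((m-k)+(n'-k')) * (starRingEnd ℂ z)^((n-k)+(m'-k')) * ((Real.exp (-(‖z‖)^2) : ℝ) : ℂ))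
        = (Real.pi : ℂ) * ((-1:ℂ)^(k+k') * (k.factorial : ℂ) * (k'.factorial : ℂ) * (m.choose k : ℂ) * (n.choose k : ℂ)
            * (m'.choose k' : ℂ) * (n'.choose k' : ℂ) * ((((m-k)+(n'-k')).factorial : ℕ) : ℂ)) := by
      intro k hk k' hk'
      simp only [Finset.mem_range] at hk hk'
      rw [integral_monomial, if_pos (by omega)]
      ring
    calc ∑ k ∈ Finset.range (min m n + 1), ∑ k' ∈ Finset.range (min m' n' + 1),
          ((-1:ℂ)^(k+k') * (k.factorial : ℂ) * (k'.factorial : ℂ) * (m.choose k : ℂ) * (n.choose k : ℂ)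
            * (m'.choose k' : ℂ) * (n'.choose k' : ℂ))
          * (∫ z : ℂ, z^((m-k)+(n'-k')) * (starRingEnd ℂ z)^((n-k)+(m'-k')) * ((Real.exp (-(‖z‖)^2) : ℝ) : ℂ))
        = ∑ k ∈ Finset.range (min m n + 1), ∑ k' ∈ Finset.range (min m' n' + 1),
          (Real.pi : ℂ) * ((-1:ℂ)^(k+k') * (k.factorial : ℂ) * (k'.factorial : ℂ) * (m.choose k : ℂ) * (n.choose k : ℂ)
            * (m'.choose k' : ℂ) * (n'.choose k' : ℂ) * ((((m-k)+(n'-k')).factorial : ℕ) : ℂ)) := by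
          refine Finset.sum_congr rfl fun k hk => Finset.sum_congr rfl fun k' hk' => hterm k hk k' hk'
      _ = (Real.pi : ℂ) * ∑ k ∈ Finset.range (min m n + 1), ∑ k' ∈ Finset.range (min m' n' + 1),
          ((-1:ℂ)^(k+k') * (k.factorial : ℂ) * (k'.factorial : ℂ) * (m.choose k : ℂ) * (n.choose k : ℂ)
            * (m'.choose k' : ℂ) * (n'.choose k' : ℂ) * ((((m-k)+(n'-k')).factorial : ℕ) : ℂ)) := by
          rw [Finset.mul_sum]
          refine Finset.sum_congr rfl fun k _ => ?_
          rw [Finset.mul_sum]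
      _ = (Real.pi : ℂ) * ((m.factorial : ℂ) * (n.factorial : ℂ) * (if n = n' then 1 else 0)) := by
          rw [comb_main m n m' n' hbal]
      _ = (Real.pi : ℂ) * (Nat.factorial m : ℂ) * (Nat.factorial n : ℂ)
            * (if m = m' then 1 else 0) * (if n = n' then 1 else 0) := by
          by_cases hnn : n = n'
          · rw [if_pos hnn, if_pos (show m = m' by omega)]; ring
          · rw [if_neg hnn]; ring
  · have hterm : ∀ k ∈ Finset.range (min m n + 1), ∀ k' ∈ Finset.range (min m' n' + 1),
        ((-1:ℂ)^(k+k') * (k.factorial : ℂ) * (k'.factorial : ℂ) * (m.choose k : ℂ) * (n.choose k : ℂ)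
            * (m'.choose k' : ℂ) * (n'.choose k' : ℂ))
          * (∫ z : ℂ, z^((m-k)+(n'-k')) * (starRingEnd ℂ z)^((n-k)+(m'-k')) * ((Real.exp (-(‖z‖)^2) : ℝ) : ℂ))
        = 0 := by
      intro k hk k' hk'
      simp only [Finset.mem_range] at hk hk'
      rw [integral_monomial, if_neg (by omega)]
      ring
    rw [Finset.sum_congr rfl (fun k hk => Finset.sum_congr rfl (fun k' hk' => hterm k hk k' hk'))]
    simp only [Finset.sum_const_zero]
    have : ¬(m = m' ∧ n = n') := by omega
    by_cases hmm : m = m'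
    · rw [if_neg (show ¬ n = n' by tauto)]; ring
    · rw [if_neg hmm]; ring
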